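/- Let w be a weight on ℝ and suppose there exist constants B, β ≥ 1 such that for all bounded intervals I ⊆ ℝ and all measurable E ⊆ I we have w(E)/w(I) ≤ B (|E|/|I|)^{1/β}. Then w satisfies the reverse Hölder inequality ( (1/|I|) ∫_I w^r )^{1/r} ≤ B^{β/r'} ((β'-1)/(β'-r))^{1/r} · (1/|I|) ∫_I w for all bounded intervals I and all exponents r with 1 < r < β', where β' = β/(β-1) and 1/r + 1/r' = 1. -/

import Mathlib

open MeasureTheory Set
open scoped ENNReal NNReal

private lemma log_eq_imp' {x y : ℝ} (hx : 0 < x) (hy : 0 < y)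
    (h : Real.log x = Real.log y) : x = y := by
  rw [← Real.exp_log hx, ← Real.exp_log hy, h]

/-- reverse Hölder inequality from the absorption property. -/
theorem stmt1 (w : ℝ → ℝ) (hw : ∀ x, 0 ≤ w x) (hmeas : Measurable w)
    (hloc : LocallyIntegrable w volume)
    (B β : ℝ) (hB : 1 ≤ B) (hβ : 1 ≤ β)
    (habs : ∀ a b : ℝ, a < b → ∀ E ⊆ Set.Ioo a b, MeasurableSet E →
      (∫ x in E, w x) / (∫ x in Set.Ioo a b, w x) ≤
        B * ((volume E).toReal / (b - a)) ^ (1 / β)) :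
    ∀ a b : ℝ, a < b → ∀ r r' : ℝ, 1 < r → r < β / (β - 1) → 1 / r + 1 / r' = 1 →
      ((b - a)⁻¹ * ∫ x in Set.Ioo a b, w x ^ r) ^ (1 / r) ≤
        B ^ (β / r') * ((β / (β - 1) - 1) / (β / (β - 1) - r)) ^ (1 / r) *
          ((b - a)⁻¹ * ∫ x in Set.Ioo a b, w x) := by
  intro a b hab r r' hr hrβ hrr'
  rcases eq_or_lt_of_le hβ with hβ1 | hβ1
  · exfalso
    rw [← hβ1] at hrβ
    norm_num at hrβ
    linarith
  set p := β / (β - 1) with hpdef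
  have hβ0 : (0:ℝ) < β - 1 := by linarith
  have hβpos : (0:ℝ) < β := by linarith
  have hp1 : 1 < p := by
    rw [hpdef, lt_div_iff₀ hβ0]; linarith
  have hrp : r < p := hrβ
  have hA : (0:ℝ) < b - a := by linarith
  have hr0 : (0:ℝ) < r := by linarith
  have hr1 : (0:ℝ) < r - 1 := by linarith
  have hpr : (0:ℝ) < p - r := by linarith
  have hp0 : (0:ℝ) < p := by linarith
  have hB0 : (0:ℝ) < B := by linarith
  have hβr' : β / r' = β * (r - 1) / r := by
    have h1 : 1 / r' = (r - 1) / r := by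
      field_simp at hrr' ⊢
      linarith
    rw [div_eq_mul_one_div β r', h1]; ring
  have hwInt : IntegrableOn w (Set.Ioo a b) :=
    (hloc.integrableOn_isCompact isCompact_Icc).mono_set Set.Ioo_subset_Icc_self
  set W := ∫ x in Set.Ioo a b, w x with hWdef
  have hWnn : 0 ≤ W := setIntegral_nonneg measurableSet_Ioo fun x _ => hw x
  have hQpos : 0 < (p - 1) / (p - r) := div_pos (by linarith) hpr
  rcases eq_or_lt_of_le hWnn with hW0 | hWpos
  · -- the case W = 0 : everything vanishes
    have hww : w =ᵐ[volume.restrict (Set.Ioo a b)] 0 := by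
      rw [← integral_eq_zero_iff_of_nonneg_ae (Filter.Eventually.of_forall fun x => hw x) hwInt]
      exact hW0.symm
    have hz : (∫ x in Set.Ioo a b, w x ^ r) = 0 := by
      rw [show (0:ℝ) = ∫ x in Set.Ioo a b, (0:ℝ) ^ r from by
        simp [Real.zero_rpow (by linarith : r ≠ 0)]]
      apply integral_congr_ae
      filter_upwards [hww] with x hx
      rw [hx]; rfl
    rw [hz, ← hW0]
    simp only [mul_zero, Real.zero_rpow (one_div_ne_zero hr0.ne'), le_refl]
  -- main case : 0 < W
  set μ := (volume.restrict (Set.Ioo a b)).withDensity fun x => ENNReal.ofReal (w x) with hμdef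
  have hwnn_ae : ∀ (ν : Measure ℝ), 0 ≤ᵐ[ν] w := fun ν => Filter.Eventually.of_forall hw
  -- measure of superlevel sets
  have hμt : ∀ t : ℝ, μ {x | t ≤ w x} =
      ENNReal.ofReal (∫ x in ({x | t ≤ w x} ∩ Set.Ioo a b), w x) := by
    intro t
    have hS : MeasurableSet {x | t ≤ w x} := measurableSet_le measurable_const hmeas
    rw [hμdef, withDensity_apply _ hS, Measure.restrict_restrict hS,
      ofReal_integral_eq_lintegral_ofReal
        (hwInt.mono_set Set.inter_subset_right) (hwnn_ae _)]
  -- first bound : μ {t ≤ w} ≤ W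
  have hkey1 : ∀ t : ℝ, μ {x | t ≤ w x} ≤ ENNReal.ofReal W := by
    intro t
    rw [hμt t]
    apply ENNReal.ofReal_le_ofReal
    exact setIntegral_mono_set hwInt (hwnn_ae _)
      (HasSubset.Subset.eventuallyLE Set.inter_subset_right)
  -- second bound
  set K := (B * W) ^ p * (b - a) ^ (1 - p) with hKdef
  have hkey2 : ∀ t : ℝ, 0 < t → μ {x | t ≤ w x} ≤ ENNReal.ofReal (K * t ^ (1 - p)) := by
    intro t ht
    rw [hμt t]
    apply ENNReal.ofReal_le_ofReal
    set E := {x | t ≤ w x} ∩ Set.Ioo a b with hEdef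
    have hEm : MeasurableSet E :=
      (measurableSet_le measurable_const hmeas).inter measurableSet_Ioo
    have hEI : E ⊆ Set.Ioo a b := Set.inter_subset_right
    have hwE : IntegrableOn w E := hwInt.mono_set hEI
    set m := ∫ x in E, w x with hmdef
    have hm0 : 0 ≤ m := setIntegral_nonneg hEm fun x _ => hw x
    have hvolE : volume E < ⊤ :=
      lt_of_le_of_lt (measure_mono hEI) measure_Ioo_lt_top
    -- Chebyshev
    have hcheb : (volume E).toReal * t ≤ m := by
      have h1 : ∫ x in E, t ≤ ∫ x in E, w x := by
        apply setIntegral_mono_on (integrableOn_const hvolE.ne) hwE hEm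
        intro x hx
        exact hx.1
      rwa [setIntegral_const, smul_eq_mul] at h1
    have habs' := habs a b hab E hEI hEm
    have hmB : m ≤ B * W * ((volume E).toReal / (b - a)) ^ (1 / β) := by
      rw [div_le_iff₀ hWpos] at habs'
      calc m ≤ B * ((volume E).toReal / (b - a)) ^ (1 / β) * W := habs'
        _ = B * W * ((volume E).toReal / (b - a)) ^ (1 / β) := by ring
    have hKpos : 0 < K := by
      rw [hKdef]
      exact mul_pos (Real.rpow_pos_of_pos (mul_pos hB0 hWpos) _) (Real.rpow_pos_of_pos hA _)
    rcases eq_or_lt_of_le hm0 with hm00 | hmpos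
    · rw [← hm00]
      exact le_of_lt (mul_pos hKpos (Real.rpow_pos_of_pos ht _))
    -- m > 0; self-improvement
    have hvt : (volume E).toReal / (b - a) ≤ m / (t * (b - a)) := by
      rw [div_le_div_iff₀ hA (by positivity)]
      calc (volume E).toReal * (t * (b - a)) = ((volume E).toReal * t) * (b - a) := by ring
        _ ≤ m * (b - a) := by nlinarith
    have hm2 : m ≤ B * W * (m / (t * (b - a))) ^ (1 / β) := by
      calc m ≤ B * W * ((volume E).toReal / (b - a)) ^ (1 / β) := hmB
        _ ≤ B * W * (m / (t * (b - a))) ^ (1 / β) := by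
            apply mul_le_mul_of_nonneg_left _ (by positivity)
            exact Real.rpow_le_rpow (by positivity) hvt (by positivity)
    have htA : (0:ℝ) < t * (b - a) := by positivity
    have hsplit : (m / (t * (b - a))) ^ (1 / β) =
        m ^ (1 / β) * (t * (b - a)) ^ (-(1 / β)) := by
      rw [Real.div_rpow hm0 htA.le, Real.rpow_neg htA.le, div_eq_mul_inv]
    have hm3 : m ^ (1 - 1 / β) ≤ B * W * (t * (b - a)) ^ (-(1 / β)) := by
      rw [Real.rpow_sub hmpos, Real.rpow_one, div_le_iff₀ (Real.rpow_pos_of_pos hmpos _)]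
      calc m ≤ B * W * (m / (t * (b - a))) ^ (1 / β) := hm2
        _ = B * W * (t * (b - a)) ^ (-(1 / β)) * m ^ (1 / β) := by rw [hsplit]; ring
    have hm4 : m ≤ (B * W * (t * (b - a)) ^ (-(1 / β))) ^ p := by
      have h5 : (m ^ (1 - 1 / β)) ^ p ≤ (B * W * (t * (b - a)) ^ (-(1 / β))) ^ p :=
        Real.rpow_le_rpow (by positivity) hm3 hp0.le
      rwa [← Real.rpow_mul hm0,
        show (1 - 1 / β) * p = 1 by rw [hpdef]; field_simp,
        Real.rpow_one] at h5
    calc m ≤ (B * W * (t * (b - a)) ^ (-(1 / β))) ^ p := hm4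
      _ = K * t ^ (1 - p) := by
          rw [Real.mul_rpow (by positivity) (by positivity),
            ← Real.rpow_mul htA.le,
            show -(1 / β) * p = 1 - p by rw [hpdef]; field_simp; try ring,
            Real.mul_rpow ht.le hA.le, hKdef]
          ring
  -- layer cake
  have hfnn : 0 ≤ᵐ[μ] w := Filter.Eventually.of_forall hw
  have hlayer := lintegral_rpow_eq_lintegral_meas_le_mul μ hfnn hmeas.aemeasurable
      (show (0:ℝ) < r - 1 by linarith)
  have hrfix : ∀ x : ℝ, 0 ≤ x → x ^ r = x * x ^ (r - 1) := by
    intro x hx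
    rw [show r = 1 + (r - 1) by ring, Real.rpow_add' hx (ne_of_gt (by linarith : (0:ℝ) < 1 + (r - 1))), Real.rpow_one]
    ring_nf
  -- identify the left lintegral with an integral against μ
  have hlhs : (∫⁻ x in Set.Ioo a b, ENNReal.ofReal (w x ^ r)) =
      ∫⁻ x, ENNReal.ofReal (w x ^ (r - 1)) ∂μ := by
    rw [hμdef, lintegral_withDensity_eq_lintegral_mul _ hmeas.ennreal_ofReal
      ((hmeas.pow measurable_const).ennreal_ofReal)]
    apply lintegral_congr fun x => ?_
    simp only [Pi.mul_apply]
    rw [← ENNReal.ofReal_mul (hw x), hrfix (w x) (hw x)]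
  set lam := B ^ β * W / (b - a) with hlamdef
  have hBβ : (0:ℝ) < B ^ β := Real.rpow_pos_of_pos hB0 β
  have hlam : 0 < lam := by rw [hlamdef]; positivity
  have hsplitIoi : (∫⁻ t in Ioi (0:ℝ), μ {x | t ≤ w x} * ENNReal.ofReal (t ^ (r - 1 - 1))) =
      (∫⁻ t in Ioc (0:ℝ) lam, μ {x | t ≤ w x} * ENNReal.ofReal (t ^ (r - 1 - 1))) + ∫⁻ t in Ioi lam, μ {x | t ≤ w x} * ENNReal.ofReal (t ^ (r - 1 - 1)) := by
    rw [← Ioc_union_Ioi_eq_Ioi hlam.le,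
      lintegral_union measurableSet_Ioi (Ioc_disjoint_Ioi le_rfl)]
  have hmble_pow : Measurable fun t : ℝ => ENNReal.ofReal (t ^ (r - 1 - 1)) :=
    (measurable_id.pow measurable_const).ennreal_ofReal
  -- first piece
  have hJ1 : (∫⁻ t in Ioc (0:ℝ) lam, ENNReal.ofReal (t ^ (r - 1 - 1))) =
      ENNReal.ofReal (lam ^ (r - 1) / (r - 1)) := by
    have hint1 : IntegrableOn (fun t : ℝ => t ^ (r - 1 - 1)) (Ioc 0 lam) := by
      rw [← intervalIntegrable_iff_integrableOn_Ioc_of_le hlam.le]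
      exact intervalIntegral.intervalIntegrable_rpow' (by linarith)
    have hnn1 : 0 ≤ᵐ[volume.restrict (Ioc (0:ℝ) lam)] fun t : ℝ => t ^ (r - 1 - 1) := by
      filter_upwards [self_mem_ae_restrict measurableSet_Ioc] with t ht
      exact Real.rpow_nonneg ht.1.le _
    rw [← ofReal_integral_eq_lintegral_ofReal hint1 hnn1]
    congr 1
    rw [← intervalIntegral.integral_of_le hlam.le,
      integral_rpow (Or.inl (by linarith : (-1:ℝ) < r - 1 - 1)),
      show r - 1 - 1 + 1 = r - 1 by ring, Real.zero_rpow (by linarith : r - 1 ≠ 0)]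
    ring
  have hT1 : (∫⁻ t in Ioc (0:ℝ) lam, μ {x | t ≤ w x} * ENNReal.ofReal (t ^ (r - 1 - 1))) ≤
      ENNReal.ofReal (W * (lam ^ (r - 1) / (r - 1))) := by
    calc (∫⁻ t in Ioc (0:ℝ) lam, μ {x | t ≤ w x} * ENNReal.ofReal (t ^ (r - 1 - 1)))
        ≤ ∫⁻ t in Ioc (0:ℝ) lam, ENNReal.ofReal W * ENNReal.ofReal (t ^ (r - 1 - 1)) :=
          lintegral_mono fun t => mul_le_mul_left (hkey1 t) _
      _ = ENNReal.ofReal W * ∫⁻ t in Ioc (0:ℝ) lam, ENNReal.ofReal (t ^ (r - 1 - 1)) :=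
          lintegral_const_mul _ hmble_pow
      _ = ENNReal.ofReal (W * (lam ^ (r - 1) / (r - 1))) := by
          rw [hJ1, ← ENNReal.ofReal_mul hWnn]
  -- second piece
  have hK0 : 0 < K := by
    rw [hKdef]
    exact mul_pos (Real.rpow_pos_of_pos (mul_pos hB0 hWpos) _) (Real.rpow_pos_of_pos hA _)
  have hJ2 : (∫⁻ t in Ioi lam, ENNReal.ofReal (t ^ (r - 1 - p))) =
      ENNReal.ofReal (lam ^ (r - p) / (p - r)) := by
    have hexp : r - 1 - p < -1 := by linarith
    have hint2 : IntegrableOn (fun t : ℝ => t ^ (r - 1 - p)) (Ioi lam) :=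
      integrableOn_Ioi_rpow_of_lt hexp hlam
    have hnn2 : 0 ≤ᵐ[volume.restrict (Ioi lam)] fun t : ℝ => t ^ (r - 1 - p) := by
      filter_upwards [self_mem_ae_restrict measurableSet_Ioi] with t ht
      exact Real.rpow_nonneg (hlam.trans ht).le _
    rw [← ofReal_integral_eq_lintegral_ofReal hint2 hnn2]
    congr 1
    rw [integral_Ioi_rpow_of_lt hexp hlam, show r - 1 - p + 1 = r - p by ring,
      show p - r = -(r - p) by ring, div_neg, neg_div]
  have hT2 : (∫⁻ t in Ioi lam, μ {x | t ≤ w x} * ENNReal.ofReal (t ^ (r - 1 - 1))) ≤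
      ENNReal.ofReal (K * (lam ^ (r - p) / (p - r))) := by
    calc (∫⁻ t in Ioi lam, μ {x | t ≤ w x} * ENNReal.ofReal (t ^ (r - 1 - 1)))
        ≤ ∫⁻ t in Ioi lam, ENNReal.ofReal K * ENNReal.ofReal (t ^ (r - 1 - p)) := by
          apply lintegral_mono_ae
          filter_upwards [self_mem_ae_restrict measurableSet_Ioi] with t ht
          have ht0 : 0 < t := hlam.trans ht
          calc μ {x | t ≤ w x} * ENNReal.ofReal (t ^ (r - 1 - 1)) ≤ ENNReal.ofReal (K * t ^ (1 - p)) * ENNReal.ofReal (t ^ (r - 1 - 1)) :=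
              mul_le_mul_left (hkey2 t ht0) _
            _ = ENNReal.ofReal K * ENNReal.ofReal (t ^ (r - 1 - p)) := by
                rw [← ENNReal.ofReal_mul (by positivity : (0:ℝ) ≤ K * t ^ (1 - p)),
                  ← ENNReal.ofReal_mul hK0.le]
                congr 1
                rw [mul_assoc, ← Real.rpow_add ht0]
                congr 1
                ring
      _ = ENNReal.ofReal K * ∫⁻ t in Ioi lam, ENNReal.ofReal (t ^ (r - 1 - p)) :=
          lintegral_const_mul _ ((measurable_id.pow measurable_const).ennreal_ofReal)
      _ = ENNReal.ofReal (K * (lam ^ (r - p) / (p - r))) := by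
          rw [hJ2, ← ENNReal.ofReal_mul hK0.le]
  -- assemble the lintegral bound
  set M : ℝ := B ^ (β * (r - 1)) * W ^ r * (b - a) ^ (1 - r) * ((p - 1) / (p - r)) with hMdef
  have hMpos : 0 < M := by
    rw [hMdef]
    exact mul_pos (mul_pos (mul_pos (Real.rpow_pos_of_pos hB0 _)
      (Real.rpow_pos_of_pos hWpos _)) (Real.rpow_pos_of_pos hA _)) hQpos
  -- log computations
  have hloglam : Real.log lam = β * Real.log B + Real.log W - Real.log (b - a) := by
    rw [hlamdef, Real.log_div (by positivity) hA.ne', Real.log_mul hBβ.ne' hWpos.ne',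
      Real.log_rpow hB0]
  have e1 : W * lam ^ (r - 1) = B ^ (β * (r - 1)) * W ^ r * (b - a) ^ (1 - r) := by
    apply log_eq_imp' (by positivity) (by positivity)
    rw [Real.log_mul hWpos.ne' (Real.rpow_pos_of_pos hlam _).ne', Real.log_rpow hlam, hloglam,
      Real.log_mul (by positivity) (Real.rpow_pos_of_pos hA _).ne',
      Real.log_mul (Real.rpow_pos_of_pos hB0 _).ne' (Real.rpow_pos_of_pos hWpos _).ne',
      Real.log_rpow hB0, Real.log_rpow hWpos, Real.log_rpow hA]
    ring
  have e2 : K * lam ^ (r - p) = B ^ (β * (r - 1)) * W ^ r * (b - a) ^ (1 - r) := by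
    apply log_eq_imp' (by positivity) (by positivity)
    rw [Real.log_mul hK0.ne' (Real.rpow_pos_of_pos hlam _).ne', hKdef,
      Real.log_mul (Real.rpow_pos_of_pos (by positivity) _).ne'
        (Real.rpow_pos_of_pos hA _).ne',
      Real.log_rpow (by positivity : (0:ℝ) < B * W), Real.log_rpow hA,
      Real.log_rpow hlam, hloglam,
      Real.log_mul (by positivity) (Real.rpow_pos_of_pos hA _).ne',
      Real.log_mul (Real.rpow_pos_of_pos hB0 _).ne' (Real.rpow_pos_of_pos hWpos _).ne',
      Real.log_rpow hB0, Real.log_rpow hWpos, Real.log_rpow hA,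
      Real.log_mul hB0.ne' hWpos.ne', hpdef]
    field_simp
    ring
  have hMeq : (r - 1) * (W * (lam ^ (r - 1) / (r - 1)) + K * (lam ^ (r - p) / (p - r))) = M := by
    rw [hMdef, ← mul_div_assoc, ← mul_div_assoc, e1, e2]
    generalize B ^ (β * (r - 1)) * W ^ r * (b - a) ^ (1 - r) = X
    field_simp
    ring
  have htotal : (∫⁻ x in Set.Ioo a b, ENNReal.ofReal (w x ^ r)) ≤ ENNReal.ofReal M := by
    rw [hlhs, hlayer]
    calc ENNReal.ofReal (r - 1) * ∫⁻ t in Ioi (0:ℝ), μ {x | t ≤ w x} * ENNReal.ofReal (t ^ (r - 1 - 1))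
        ≤ ENNReal.ofReal (r - 1) *
            (ENNReal.ofReal (W * (lam ^ (r - 1) / (r - 1))) +
              ENNReal.ofReal (K * (lam ^ (r - p) / (p - r)))) := by
          apply mul_le_mul_right
          rw [hsplitIoi]
          exact add_le_add hT1 hT2
      _ = ENNReal.ofReal M := by
          rw [← ENNReal.ofReal_add (by positivity) (by positivity),
            ← ENNReal.ofReal_mul hr1.le, hMeq]
  -- back to Bochner integrals
  have hInt_eq : (∫ x in Set.Ioo a b, w x ^ r) =
      (∫⁻ x in Set.Ioo a b, ENNReal.ofReal (w x ^ r)).toReal :=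
    integral_eq_lintegral_of_nonneg_ae
      (Filter.Eventually.of_forall fun x => Real.rpow_nonneg (hw x) r)
      ((hmeas.pow measurable_const).aestronglyMeasurable)
  have hIr : (∫ x in Set.Ioo a b, w x ^ r) ≤ M := by
    rw [hInt_eq]; exact ENNReal.toReal_le_of_le_ofReal hMpos.le htotal
  have hIrnn : 0 ≤ ∫ x in Set.Ioo a b, w x ^ r := by
    rw [hInt_eq]; exact ENNReal.toReal_nonneg
  calc ((b - a)⁻¹ * ∫ x in Set.Ioo a b, w x ^ r) ^ (1 / r)
      ≤ ((b - a)⁻¹ * M) ^ (1 / r) := by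
        apply Real.rpow_le_rpow (by positivity)
          (mul_le_mul_of_nonneg_left hIr (by positivity)) (by positivity)
    _ = B ^ (β / r') * ((p - 1) / (p - r)) ^ (1 / r) * ((b - a)⁻¹ * W) := by
        apply log_eq_imp' (by positivity) (by positivity)
        rw [Real.log_rpow (by positivity), Real.log_mul (by positivity) hMpos.ne',
          Real.log_inv, hMdef,
          Real.log_mul (by positivity) hQpos.ne',
          Real.log_mul (by positivity) (Real.rpow_pos_of_pos hA _).ne',
          Real.log_mul (Real.rpow_pos_of_pos hB0 _).ne' (Real.rpow_pos_of_pos hWpos _).ne',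
          Real.log_rpow hB0, Real.log_rpow hWpos, Real.log_rpow hA,
          Real.log_mul (by positivity) (by positivity : (0:ℝ) < (b - a)⁻¹ * W).ne',
          Real.log_mul (Real.rpow_pos_of_pos hB0 _).ne' (Real.rpow_pos_of_pos hQpos _).ne',
          Real.log_rpow hB0, Real.log_rpow hQpos,
          Real.log_mul (by positivity : (0:ℝ) < (b - a)⁻¹).ne' hWpos.ne',
          Real.log_inv, hβr']
        field_simp
        ring
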